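/- arXiv:1401.3048 — 3 statements merged into one kernel-verified Lean document; each statement's English description precedes it below -/
import Mathlib

section
/- Let f, g be homogeneous polynomials in C[x_0,...,x_n] with V(f) smooth. Then the ideals I(f,g) = (f) + m_2(f,g) and J(f,g) = (f) + (g) + m_2(f,g) have the same radical. -/
open MvPolynomial

lemma euler_poly {n d : ℕ} (p : MvPolynomial (Fin (n + 1)) ℂ) (hp : p.IsHomogeneous d) :
    ∑ i, X i * pderiv i p = d • p := by
  conv_lhs => rw [show p = ∑ s ∈ p.support, monomial s (coeff s p) from
    (p.support_sum_monomial_coeff).symm]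
  simp only [map_sum, Finset.mul_sum]
  rw [Finset.sum_comm]
  conv_rhs => rw [show p = ∑ s ∈ p.support, monomial s (coeff s p) from
    (p.support_sum_monomial_coeff).symm, Finset.smul_sum]
  refine Finset.sum_congr rfl fun s hs => ?_
  have hdeg : ∑ i, s i = d := by
    have := hp (mem_support_iff.mp hs)
    rw [← this, Finsupp.weight_apply, Finsupp.sum]
    simp only [Pi.one_apply, smul_eq_mul, mul_one]
    exact (Finset.sum_subset (Finset.subset_univ _)
      (fun i _ hi => Finsupp.notMem_support_iff.mp hi)).symm
  calc ∑ i, X i * pderiv i (monomial s (coeff s p))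
      = ∑ i, (s i : ℂ) • monomial s (coeff s p) := by
        refine Finset.sum_congr rfl fun i _ => ?_
        rw [pderiv_monomial]
        by_cases h : s i = 0
        · simp [h]
        · rw [X, monomial_mul, one_mul, add_tsub_cancel_of_le
            (Finsupp.single_le_iff.mpr (Nat.one_le_iff_ne_zero.mpr h))]
          rw [smul_monomial, smul_eq_mul, mul_comm]
    _ = d • monomial s (coeff s p) := by
        simp_rw [Nat.cast_smul_eq_nsmul]
        rw [← Finset.sum_smul, hdeg]

lemma euler_eval {n d : ℕ} (p : MvPolynomial (Fin (n + 1)) ℂ) (hp : p.IsHomogeneous d)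
    (q : Fin (n + 1) → ℂ) :
    (d : ℂ) * eval q p = ∑ i, q i * eval q (pderiv i p) := by
  have := congrArg (eval q) (euler_poly p hp)
  simp only [map_sum, map_mul, eval_X, smul_eq_mul, nsmul_eq_mul, map_natCast] at this ⊢
  rw [← this]

/-- The ideals `I(f,g) = (f) + m₂(f,g)` and `J(f,g) = (f) + (g) + m₂(f,g)`
have the same radical when `V(f)` is smooth. -/
theorem stmt_1 (n d e : ℕ) (hd : 0 < d) (he : 0 < e)
    (f g : MvPolynomial (Fin (n + 1)) ℂ)
    (hf : f.IsHomogeneous d) (hg : g.IsHomogeneous e)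
    (hsmooth : ∀ q : Fin (n + 1) → ℂ, q ≠ 0 → ∃ i, eval q (pderiv i f) ≠ 0)
    (m2 : Ideal (MvPolynomial (Fin (n + 1)) ℂ))
    (hm2 : m2 = Ideal.span (Set.range fun ij : Fin (n + 1) × Fin (n + 1) =>
      pderiv ij.1 f * pderiv ij.2 g - pderiv ij.2 f * pderiv ij.1 g)) :
    (Ideal.span {f} ⊔ m2).radical = (Ideal.span {f, g} ⊔ m2).radical := by
  set I := Ideal.span {f} ⊔ m2 with hI
  -- `g` vanishes on the zero locus of `I`, hence lies in the radical (Nullstellensatz)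
  have hgI : g ∈ I.radical := by
    rw [← vanishingIdeal_zeroLocus_eq_radical (K := ℂ), mem_vanishingIdeal_iff]
    intro q hq
    rw [mem_zeroLocus_iff] at hq
    change ∀ p ∈ I, eval q p = 0 at hq
    show eval q g = 0
    have hfq : eval q f = 0 := hq f (Ideal.mem_sup_left (Ideal.subset_span rfl))
    by_cases h0 : q = 0
    · subst h0
      have hc0 : coeff 0 g = 0 := by
        by_contra hc
        have := hg hc
        simp at this
        omega
      rw [eval_zero, constantCoeff_eq]
      exact hc0
    · obtain ⟨i, hi⟩ := hsmooth q h0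
      have hminor : ∀ j, eval q (pderiv i f) * eval q (pderiv j g)
          = eval q (pderiv j f) * eval q (pderiv i g) := by
        intro j
        have hm : pderiv i f * pderiv j g - pderiv j f * pderiv i g ∈ m2 := by
          rw [hm2]
          exact Ideal.subset_span ⟨(i, j), rfl⟩
        have h := hq _ (Ideal.mem_sup_right hm)
        simp only [map_sub, map_mul] at h
        exact sub_eq_zero.mp h
      have key : (e : ℂ) * eval q g * eval q (pderiv i f) = 0 := by
        calc (e : ℂ) * eval q g * eval q (pderiv i f)
            = (∑ j, q j * eval q (pderiv j g)) * eval q (pderiv i f) := by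
              rw [euler_eval g hg q]
          _ = ∑ j, q j * (eval q (pderiv i f) * eval q (pderiv j g)) := by
              rw [Finset.sum_mul]; exact Finset.sum_congr rfl fun j _ => by ring
          _ = ∑ j, q j * (eval q (pderiv j f) * eval q (pderiv i g)) := by
              exact Finset.sum_congr rfl fun j _ => by rw [hminor j]
          _ = (∑ j, q j * eval q (pderiv j f)) * eval q (pderiv i g) := by
              rw [Finset.sum_mul]; exact Finset.sum_congr rfl fun j _ => by ring
          _ = 0 := by rw [← euler_eval f hf q, hfq, mul_zero, zero_mul]
      have he' : (e : ℂ) ≠ 0 := Nat.cast_ne_zero.mpr he.ne'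
      rcases mul_eq_zero.mp key with h | h
      · rcases mul_eq_zero.mp h with h | h
        · exact absurd h he'
        · exact h
      · exact absurd h hi
  -- conclude
  have hJ : Ideal.span {f, g} ⊔ m2 ≤ I.radical := by
    apply sup_le
    · rw [Ideal.span_insert]
      apply sup_le
      · exact le_trans (le_sup_left : Ideal.span {f} ≤ I) Ideal.le_radical
      · rw [Ideal.span_le, Set.singleton_subset_iff]
        exact hgI
    · exact le_trans (le_sup_right : m2 ≤ I) Ideal.le_radical
  apply le_antisymm
  · exact Ideal.radical_mono (sup_le_sup_right
      (Ideal.span_mono (Set.singleton_subset_iff.mpr (Set.mem_insert f {g}))) m2)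
  · calc (Ideal.span {f, g} ⊔ m2).radical
        ≤ I.radical.radical := Ideal.radical_mono hJ
      _ = I.radical := I.radical_idem
end

section
/- Let f, g be homogeneous polynomials in C[x_0,...,x_n] with V(f) smooth. Then dim_C S/((f)+m_2(f,g)) < ∞ if and only if dim_C S/((f)+(g)+m_2(f,g)) < ∞. -/
open MvPolynomial

namespace Stmt2Aux
variable {m : ℕ}

lemma X_mul_pderiv_monomial (i : Fin m) (d : Fin m →₀ ℕ) (c : ℂ) :
    X i * pderiv i (monomial d c) = monomial d (c * d i) := by
  rw [pderiv_monomial]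
  by_cases h : d i = 0
  · simp [h]
  · rw [X, monomial_mul, one_mul,
      add_tsub_cancel_of_le (Finsupp.single_le_iff.mpr (Nat.one_le_iff_ne_zero.mpr h))]

lemma euler {p : MvPolynomial (Fin m) ℂ} {k : ℕ} (hp : p.IsHomogeneous k) :
    ∑ i, X i * pderiv i p = C (k : ℂ) * p := by
  conv_lhs => rw [p.as_sum]
  conv_rhs => rw [p.as_sum]
  simp only [map_sum, Finset.mul_sum]
  rw [Finset.sum_comm]
  refine Finset.sum_congr rfl fun d hd => ?_
  rw [mem_support_iff] at hd
  have hdeg : (∑ i, (d i : ℂ)) = (k : ℂ) := by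
    have h1 : d.degree = k := by
      rw [Finsupp.degree_eq_weight_one]; exact hp hd
    have h2 : ∑ i, d i = d.degree := by
      rw [Finsupp.degree]
      exact (Finset.sum_subset (Finset.subset_univ _)
        (fun x _ hx => Finsupp.notMem_support_iff.mp hx)).symm
    rw [← Nat.cast_sum, h2, h1]
  calc ∑ i, X i * pderiv i (monomial d (coeff d p))
      = ∑ i, monomial d (coeff d p * d i) :=
        Finset.sum_congr rfl fun i _ => X_mul_pderiv_monomial i d _
    _ = monomial d (coeff d p * ∑ i, (d i : ℂ)) := by
        rw [Finset.mul_sum, map_sum]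
    _ = C (k : ℂ) * monomial d (coeff d p) := by
        rw [hdeg, C_mul_monomial, mul_comm]

lemma eval_smul' {p : MvPolynomial (Fin m) ℂ} {k : ℕ} (hp : p.IsHomogeneous k)
    (t : ℂ) (q : Fin m → ℂ) : eval (t • q) p = t ^ k * eval q p := by
  rw [eval_eq, eval_eq, Finset.mul_sum]
  refine Finset.sum_congr rfl fun d hd => ?_
  rw [mem_support_iff] at hd
  have h1 : ∑ i ∈ d.support, d i = k := by
    have := hp hd
    rw [← Finsupp.degree_apply, Finsupp.degree_eq_weight_one]; exact this
  have : ∏ i ∈ d.support, (t • q) i ^ d i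
      = (∏ i ∈ d.support, t ^ d i) * ∏ i ∈ d.support, q i ^ d i := by
    rw [← Finset.prod_mul_distrib]
    exact Finset.prod_congr rfl fun i _ => by simp [mul_pow]
  rw [this, Finset.prod_pow_eq_pow_sum, h1]
  ring

lemma pderiv_isHomogeneous {p : MvPolynomial (Fin m) ℂ} {k : ℕ} (hp : p.IsHomogeneous k)
    (i : Fin m) : (pderiv i p).IsHomogeneous (k - 1) := by
  conv => arg 1; rw [p.as_sum]
  rw [map_sum]
  apply IsHomogeneous.sum
  intro d hd
  rw [mem_support_iff] at hd
  rw [pderiv_monomial]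
  by_cases h : d i = 0
  · simp [h]
    exact isHomogeneous_zero _ _ _
  · apply isHomogeneous_monomial
    have hdk : d.degree = k := by rw [Finsupp.degree_eq_weight_one]; exact hp hd
    have hle : Finsupp.single i 1 ≤ d := Finsupp.single_le_iff.mpr (Nat.one_le_iff_ne_zero.mpr h)
    have hadd : Finsupp.degree ((d - Finsupp.single i 1) + Finsupp.single i 1)
        = (d - Finsupp.single i 1).degree + (Finsupp.single i 1).degree := by
      simp [Finsupp.degree_eq_weight_one, map_add]
    have hs : Finsupp.degree (Finsupp.single i 1) = 1 := by
      exact Finsupp.degree_single i 1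
    rw [tsub_add_cancel_of_le hle, hdk, hs] at hadd
    omega

lemma finite_of_zeroLocus_subset (I : Ideal (MvPolynomial (Fin m) ℂ))
    (hz : MvPolynomial.zeroLocus ℂ I ⊆ {0}) :
    FiniteDimensional ℂ (MvPolynomial (Fin m) ℂ ⧸ I) := by
  set mk := Ideal.Quotient.mkₐ ℂ I with hmk
  have hX : ∀ i : Fin m, IsIntegral ℂ (mk (X i)) := by
    intro i
    have hXrad : (X i : MvPolynomial (Fin m) ℂ) ∈ I.radical := by
      rw [← MvPolynomial.vanishingIdeal_zeroLocus_eq_radical (K := ℂ), mem_vanishingIdeal_iff]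
      intro x hx
      have : x = 0 := hz hx
      simp [this]
    obtain ⟨N, hN⟩ := Ideal.mem_radical_iff.mp hXrad
    refine ⟨Polynomial.X ^ N, Polynomial.monic_X_pow _, ?_⟩
    rw [Polynomial.eval₂_X_pow, ← map_pow]
    exact Ideal.Quotient.eq_zero_iff_mem.mpr hN
  have hadj : Algebra.adjoin ℂ (mk '' Set.range X) = ⊤ := by
    rw [← AlgHom.map_adjoin, MvPolynomial.adjoin_range_X, Algebra.map_top, AlgHom.range_eq_top]
    exact Ideal.Quotient.mkₐ_surjective ℂ I
  have hfg : (Algebra.adjoin ℂ (mk '' Set.range X)).toSubmodule.FG :=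
    fg_adjoin_of_finite ((Set.finite_range X).image mk) (by
      rintro x ⟨y, ⟨i, rfl⟩, rfl⟩
      exact hX i)
  rw [hadj] at hfg
  exact Module.finite_def.mpr hfg

lemma zeroLocus_subset_of_finite {G : Set (MvPolynomial (Fin m) ℂ)}
    (hG : ∀ p ∈ G, ∃ k, p.IsHomogeneous k)
    (hfin : FiniteDimensional ℂ (MvPolynomial (Fin m) ℂ ⧸ Ideal.span G)) :
    MvPolynomial.zeroLocus ℂ (Ideal.span G) ⊆ {0} := by
  intro q hq
  by_contra hq0
  obtain ⟨i, hi⟩ : ∃ i, q i ≠ 0 := by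
    by_contra h
    push_neg at h
    exact hq0 (funext h)
  have hint : Algebra.IsIntegral ℂ (MvPolynomial (Fin m) ℂ ⧸ Ideal.span G) :=
    Algebra.IsIntegral.of_finite ℂ _
  obtain ⟨P, hPm, hP0⟩ := hint.isIntegral (Ideal.Quotient.mkₐ ℂ (Ideal.span G) (X i))
  have hmem : (Polynomial.aeval (X i : MvPolynomial (Fin m) ℂ)) P ∈ Ideal.span G := by
    rw [← Ideal.Quotient.eq_zero_iff_mem, ← Ideal.Quotient.mkₐ_eq_mk ℂ,
      ← Polynomial.aeval_algHom_apply (Ideal.Quotient.mkₐ ℂ (Ideal.span G)) (X i) P,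
      Polynomial.aeval_def, hP0]
  have hall : ∀ t : ℂ, (t • q) ∈ MvPolynomial.zeroLocus ℂ (Ideal.span G) := by
    intro t
    rw [mem_zeroLocus_iff]
    intro p hp
    show eval (t • q) p = 0
    refine Submodule.span_induction ?_ ?_ ?_ ?_ hp
    · intro x hx
      obtain ⟨k, hk⟩ := hG x hx
      rw [eval_smul' hk, (show eval q x = 0 from hq x (Ideal.subset_span hx)), mul_zero]
    · simp
    · intro x y _ _ hx hy
      rw [map_add, hx, hy, add_zero]
    · intro r x _ hx
      rw [smul_eq_mul, map_mul, hx, mul_zero]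
  have hroot : ∀ t : ℂ, P.IsRoot (t * q i) := by
    intro t
    have h2 : eval (t • q) _ = 0 := hall t _ hmem
    have h3 : eval (t • q) ((Polynomial.aeval (X i : MvPolynomial (Fin m) ℂ)) P)
        = Polynomial.eval ((t • q) i) P := by
      calc eval (t • q) ((Polynomial.aeval (X i : MvPolynomial (Fin m) ℂ)) P)
          = MvPolynomial.aeval (t • q) ((Polynomial.aeval (X i : MvPolynomial (Fin m) ℂ)) P) := by
            rw [← MvPolynomial.coe_aeval_eq_eval]; rfl
        _ = Polynomial.aeval (MvPolynomial.aeval (t • q) (X i)) P :=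
            (Polynomial.aeval_algHom_apply _ _ _).symm
        _ = Polynomial.eval ((t • q) i) P := by
            rw [aeval_X, ← Polynomial.coe_aeval_eq_eval]
    have h4 : (t • q) i = t * q i := rfl
    rw [Polynomial.IsRoot, ← h4, ← h3, h2]
  have hPne : P ≠ 0 := hPm.ne_zero
  have hfin' : {x : ℂ | P.IsRoot x}.Finite := Polynomial.finite_setOf_isRoot hPne
  have hinf : {x : ℂ | P.IsRoot x}.Infinite :=
    Set.infinite_of_injective_forall_mem (f := fun t : ℂ => t * q i)
      (fun a b hab => mul_right_cancel₀ hi hab) (fun t => hroot t)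
  exact hinf hfin'

end Stmt2Aux

open Stmt2Aux in
/-- `dim S/((f)+m₂(f,g)) < ∞` iff `dim S/((f)+(g)+m₂(f,g)) < ∞` when `V(f)` is smooth. -/
theorem stmt_2 (n d e : ℕ) (hd : 0 < d) (he : 0 < e)
    (f g : MvPolynomial (Fin (n + 1)) ℂ)
    (hf : f.IsHomogeneous d) (hg : g.IsHomogeneous e)
    (hsmooth : ∀ q : Fin (n + 1) → ℂ, q ≠ 0 → ∃ i, eval q (pderiv i f) ≠ 0)
    (m2 : Ideal (MvPolynomial (Fin (n + 1)) ℂ))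
    (hm2 : m2 = Ideal.span (Set.range fun ij : Fin (n + 1) × Fin (n + 1) =>
      pderiv ij.1 f * pderiv ij.2 g - pderiv ij.2 f * pderiv ij.1 g)) :
    FiniteDimensional ℂ (MvPolynomial (Fin (n + 1)) ℂ ⧸ (Ideal.span {f} ⊔ m2)) ↔
      FiniteDimensional ℂ (MvPolynomial (Fin (n + 1)) ℂ ⧸ (Ideal.span {f, g} ⊔ m2)) := by
  set minors := fun ij : Fin (n + 1) × Fin (n + 1) =>
    pderiv ij.1 f * pderiv ij.2 g - pderiv ij.2 f * pderiv ij.1 g with hminors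
  set G₁ : Set (MvPolynomial (Fin (n + 1)) ℂ) := {f} ∪ Set.range minors with hG₁def
  set G₂ : Set (MvPolynomial (Fin (n + 1)) ℂ) := {f, g} ∪ Set.range minors with hG₂def
  have hI₁ : Ideal.span {f} ⊔ m2 = Ideal.span G₁ := by
    rw [hm2, ← Ideal.span_union]
  have hI₂ : Ideal.span {f, g} ⊔ m2 = Ideal.span G₂ := by
    rw [hm2, ← Ideal.span_union]
  have hminhom : ∀ p ∈ Set.range minors, p.IsHomogeneous ((d - 1) + (e - 1)) := by
    rintro p ⟨⟨i, j⟩, rfl⟩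
    exact ((pderiv_isHomogeneous hf i).mul (pderiv_isHomogeneous hg j)).sub
      ((pderiv_isHomogeneous hf j).mul (pderiv_isHomogeneous hg i))
  have hG₁hom : ∀ p ∈ G₁, ∃ k, p.IsHomogeneous k := by
    rintro p (rfl | hp)
    · exact ⟨d, hf⟩
    · exact ⟨_, hminhom p hp⟩
  have hG₂hom : ∀ p ∈ G₂, ∃ k, p.IsHomogeneous k := by
    rintro p ((rfl | rfl) | hp)
    · exact ⟨d, hf⟩
    · exact ⟨e, hg⟩
    · exact ⟨_, hminhom p hp⟩
  rw [hI₁, hI₂]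
  constructor
  · intro h1
    apply finite_of_zeroLocus_subset
    refine subset_trans ?_ (zeroLocus_subset_of_finite hG₁hom h1)
    exact MvPolynomial.zeroLocus_anti_mono (Ideal.span_mono (by
      rw [hG₁def, hG₂def]
      apply Set.union_subset_union_left
      simp [Set.singleton_subset_iff]))
  · intro h2
    apply finite_of_zeroLocus_subset
    have hz2 := zeroLocus_subset_of_finite hG₂hom h2
    intro q hq
    by_cases hq0 : q = 0
    · exact hq0 ▸ rfl
    obtain ⟨i₀, hi₀⟩ := hsmooth q hq0
    have hfq : eval q f = 0 := hq f (Ideal.subset_span (Or.inl rfl))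
    have hmin : ∀ i j : Fin (n + 1),
        eval q (pderiv i f) * eval q (pderiv j g)
          = eval q (pderiv j f) * eval q (pderiv i g) := by
      intro i j
      have := hq (minors (i, j)) (Ideal.subset_span (Or.inr ⟨(i, j), rfl⟩))
      rw [hminors] at this
      simp only [map_sub, map_mul, MvPolynomial.coe_aeval_eq_eval] at this
      exact sub_eq_zero.mp this
    have hEf : ∑ j, q j * eval q (pderiv j f) = (d : ℂ) * eval q f := by
      have := congrArg (eval q) (euler hf)
      simpa only [map_sum, map_mul, eval_X, eval_C] using this
    have hEg : ∑ j, q j * eval q (pderiv j g) = (e : ℂ) * eval q g := by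
      have := congrArg (eval q) (euler hg)
      simpa only [map_sum, map_mul, eval_X, eval_C] using this
    have hgq : eval q g = 0 := by
      have key : eval q (pderiv i₀ f) * ((e : ℂ) * eval q g) = 0 := by
        calc eval q (pderiv i₀ f) * ((e : ℂ) * eval q g)
            = eval q (pderiv i₀ f) * ∑ j, q j * eval q (pderiv j g) := by rw [hEg]
          _ = ∑ j, q j * (eval q (pderiv i₀ f) * eval q (pderiv j g)) := by
              rw [Finset.mul_sum]; exact Finset.sum_congr rfl fun j _ => by ring
          _ = ∑ j, q j * (eval q (pderiv j f) * eval q (pderiv i₀ g)) :=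
              Finset.sum_congr rfl fun j _ => by rw [hmin i₀ j]
          _ = (∑ j, q j * eval q (pderiv j f)) * eval q (pderiv i₀ g) := by
              rw [Finset.sum_mul]; exact Finset.sum_congr rfl fun j _ => by ring
          _ = 0 := by rw [hEf, hfq]; ring
      have he' : (e : ℂ) ≠ 0 := Nat.cast_ne_zero.mpr he.ne'
      rcases mul_eq_zero.mp key with h | h
      · exact absurd h hi₀
      · rcases mul_eq_zero.mp h with h' | h'
        · exact absurd h' he'
        · exact h'
    apply hz2
    rw [MvPolynomial.mem_zeroLocus_iff]
    intro p hp
    refine Submodule.span_induction ?_ ?_ ?_ ?_ hp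
    · rintro x ((rfl | rfl) | hx)
      · exact hfq
      · exact hgq
      · exact hq x (Ideal.subset_span (Or.inr hx))
    · simp
    · intro x y _ _ hx hy
      rw [map_add, hx, hy, add_zero]
    · intro r x _ hx
      rw [smul_eq_mul, map_mul, hx, mul_zero]
end

section
/- Let f = x^2+y^2+z^2+w^2 and g = xzw + (z+w)y^2 + x^3 + x^2y + xy^2 + y^3 in C[x,y,z,w]. Then g does not belong to the ideal I(f,g) = (f) + m_2(f,g), although g belongs to the radical of I(f,g); in particular I(f,g) ≠ J(f,g) = (f)+(g)+m_2(f,g). -/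
open MvPolynomial

noncomputable def expo (a b c d : ℕ) : Fin 4 →₀ ℕ := Finsupp.equivFunOnFinite.symm ![a, b, c, d]

lemma expo_le {a b c d a' b' c' d' : ℕ} :
    expo a b c d ≤ expo a' b' c' d' ↔ a ≤ a' ∧ b ≤ b' ∧ c ≤ c' ∧ d ≤ d' := by
  rw [Finsupp.le_def]
  constructor
  · intro h; exact ⟨h 0, h 1, h 2, h 3⟩
  · rintro ⟨h1, h2, h3, h4⟩ i; fin_cases i <;> simpa [expo]

lemma expo_eq {a b c d a' b' c' d' : ℕ} :
    expo a b c d = expo a' b' c' d' ↔ a = a' ∧ b = b' ∧ c = c' ∧ d = d' := by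
  constructor
  · intro h
    have h0 := DFunLike.congr_fun h 0
    have h1 := DFunLike.congr_fun h 1
    have h2 := DFunLike.congr_fun h 2
    have h3 := DFunLike.congr_fun h 3
    simp [expo] at h0 h1 h2 h3
    exact ⟨h0, h1, h2, h3⟩
  · rintro ⟨rfl, rfl, rfl, rfl⟩; rfl

lemma mono_eq (a b c d : ℕ) (q : ℂ) :
    (monomial (expo a b c d) q : MvPolynomial (Fin 4) ℂ)
      = C q * X 0 ^ a * X 1 ^ b * X 2 ^ c * X 3 ^ d := by
  have h : expo a b c d = Finsupp.single 0 a + Finsupp.single 1 b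
      + Finsupp.single 2 c + Finsupp.single 3 d := by
    ext i; fin_cases i <;> simp [expo, Finsupp.single_apply]
  rw [h, C_apply, X_pow_eq_monomial, X_pow_eq_monomial, X_pow_eq_monomial, X_pow_eq_monomial,
    monomial_mul, monomial_mul, monomial_mul, monomial_mul]
  simp

lemma key (r : MvPolynomial (Fin 4) ℂ) {a b c d : ℕ} (q : ℂ)
    (h : ¬(a ≤ 1 ∧ b ≤ 0 ∧ c ≤ 1 ∧ d ≤ 1)) :
    coeff (expo 1 0 1 1) (r * monomial (expo a b c d) q) = 0 := by
  rw [coeff_mul_monomial', if_neg]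
  rw [expo_le]; exact h

/-- The set of polynomials all of whose multiples have vanishing `xzw`-coefficient. -/
noncomputable def K : Ideal (MvPolynomial (Fin 4) ℂ) where
  carrier := {p | ∀ r, coeff (expo 1 0 1 1) (r * p) = 0}
  add_mem' := by
    intro p q hp hq r
    simp only [mul_add, coeff_add, hp r, hq r, add_zero]
  zero_mem' := by intro r; simp
  smul_mem' := by
    intro s p hp r
    rw [smul_eq_mul, ← mul_assoc]
    exact hp (r * s)

lemma mem_K {p : MvPolynomial (Fin 4) ℂ} :
    p ∈ K ↔ ∀ r, coeff (expo 1 0 1 1) (r * p) = 0 := Iff.rfl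

set_option maxHeartbeats 1000000 in
/-- For `f = x²+y²+z²+w²` and `g = xzw + (z+w)y² + x³ + x²y + xy² + y³`,
`g ∉ I(f,g)` although `g ∈ √I(f,g)`; in particular `I(f,g) ≠ J(f,g)`. -/
theorem stmt_19 (f g : MvPolynomial (Fin 4) ℂ)
    (hf : f = X 0 ^ 2 + X 1 ^ 2 + X 2 ^ 2 + X 3 ^ 2)
    (hg : g = X 0 * X 2 * X 3 + (X 2 + X 3) * X 1 ^ 2 + X 0 ^ 3 + X 0 ^ 2 * X 1
      + X 0 * X 1 ^ 2 + X 1 ^ 3)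
    (m2 : Ideal (MvPolynomial (Fin 4) ℂ))
    (hm2 : m2 = Ideal.span (Set.range fun ij : Fin 4 × Fin 4 =>
      pderiv ij.1 f * pderiv ij.2 g - pderiv ij.2 f * pderiv ij.1 g)) :
    g ∉ Ideal.span {f} ⊔ m2 ∧ g ∈ (Ideal.span {f} ⊔ m2).radical ∧
      Ideal.span {f} ⊔ m2 ≠ Ideal.span {f, g} ⊔ m2 := by
  have pf0 : pderiv 0 f = 2 * X 0 := by
    rw [hf]; simp [pderiv_pow, pderiv_mul]; try ring
  have pf1 : pderiv 1 f = 2 * X 1 := by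
    rw [hf]; simp [pderiv_pow, pderiv_mul]; try ring
  have pf2 : pderiv 2 f = 2 * X 2 := by
    rw [hf]; simp [pderiv_pow, pderiv_mul]; try ring
  have pf3 : pderiv 3 f = 2 * X 3 := by
    rw [hf]; simp [pderiv_pow, pderiv_mul]; try ring
  have pg0 : pderiv 0 g = 3 * X 0 ^ 2 + 2 * X 0 * X 1 + X 1 ^ 2 + X 2 * X 3 := by
    rw [hg]; simp [pderiv_pow, pderiv_mul]; try ring
  have pg1 : pderiv 1 g = X 0 ^ 2 + 2 * X 0 * X 1 + 3 * X 1 ^ 2 + 2 * X 1 * X 2 + 2 * X 1 * X 3 := by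
    rw [hg]; simp [pderiv_pow, pderiv_mul]; try ring
  have pg2 : pderiv 2 g = X 0 * X 3 + X 1 ^ 2 := by
    rw [hg]; simp [pderiv_pow, pderiv_mul]; try ring
  have pg3 : pderiv 3 g = X 0 * X 2 + X 1 ^ 2 := by
    rw [hg]; simp [pderiv_pow, pderiv_mul]; try ring
  have hM01 : pderiv 0 f * pderiv 1 g - pderiv 1 f * pderiv 0 g = monomial (expo 3 0 0 0) 2 - monomial (expo 2 1 0 0) 2 + monomial (expo 1 2 0 0) 2 + monomial (expo 1 1 1 0) 4 + monomial (expo 1 1 0 1) 4 - monomial (expo 0 3 0 0) 2 - monomial (expo 0 1 1 1) 2 := by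
    rw [pf0, pg1, pf1, pg0]
    simp only [mono_eq, map_ofNat, C_1, one_mul]
    ring
  have hK01 : (pderiv 0 f * pderiv 1 g - pderiv 1 f * pderiv 0 g) ∈ K := by
    rw [mem_K, hM01]
    intro r
    simp only [mul_add, mul_sub, mul_neg, coeff_add, coeff_sub, coeff_neg]
    rw [key r 2 (by norm_num), key r 2 (by norm_num), key r 2 (by norm_num), key r 4 (by norm_num), key r 4 (by norm_num), key r 2 (by norm_num), key r 2 (by norm_num)]
    norm_num
  have hM02 : pderiv 0 f * pderiv 2 g - pderiv 2 f * pderiv 0 g = -monomial (expo 2 0 1 0) 6 + monomial (expo 2 0 0 1) 2 + monomial (expo 1 2 0 0) 2 - monomial (expo 1 1 1 0) 4 - monomial (expo 0 2 1 0) 2 - monomial (expo 0 0 2 1) 2 := by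
    rw [pf0, pg2, pf2, pg0]
    simp only [mono_eq, map_ofNat, C_1, one_mul]
    ring
  have hK02 : (pderiv 0 f * pderiv 2 g - pderiv 2 f * pderiv 0 g) ∈ K := by
    rw [mem_K, hM02]
    intro r
    simp only [mul_add, mul_sub, mul_neg, coeff_add, coeff_sub, coeff_neg]
    rw [key r 6 (by norm_num), key r 2 (by norm_num), key r 2 (by norm_num), key r 4 (by norm_num), key r 2 (by norm_num), key r 2 (by norm_num)]
    norm_num
  have hM03 : pderiv 0 f * pderiv 3 g - pderiv 3 f * pderiv 0 g = monomial (expo 2 0 1 0) 2 - monomial (expo 2 0 0 1) 6 + monomial (expo 1 2 0 0) 2 - monomial (expo 1 1 0 1) 4 - monomial (expo 0 2 0 1) 2 - monomial (expo 0 0 1 2) 2 := by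
    rw [pf0, pg3, pf3, pg0]
    simp only [mono_eq, map_ofNat, C_1, one_mul]
    ring
  have hK03 : (pderiv 0 f * pderiv 3 g - pderiv 3 f * pderiv 0 g) ∈ K := by
    rw [mem_K, hM03]
    intro r
    simp only [mul_add, mul_sub, mul_neg, coeff_add, coeff_sub, coeff_neg]
    rw [key r 2 (by norm_num), key r 6 (by norm_num), key r 2 (by norm_num), key r 4 (by norm_num), key r 2 (by norm_num), key r 2 (by norm_num)]
    norm_num
  have hM12 : pderiv 1 f * pderiv 2 g - pderiv 2 f * pderiv 1 g = -monomial (expo 2 0 1 0) 2 - monomial (expo 1 1 1 0) 4 + monomial (expo 1 1 0 1) 2 + monomial (expo 0 3 0 0) 2 - monomial (expo 0 2 1 0) 6 - monomial (expo 0 1 2 0) 4 - monomial (expo 0 1 1 1) 4 := by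
    rw [pf1, pg2, pf2, pg1]
    simp only [mono_eq, map_ofNat, C_1, one_mul]
    ring
  have hK12 : (pderiv 1 f * pderiv 2 g - pderiv 2 f * pderiv 1 g) ∈ K := by
    rw [mem_K, hM12]
    intro r
    simp only [mul_add, mul_sub, mul_neg, coeff_add, coeff_sub, coeff_neg]
    rw [key r 2 (by norm_num), key r 4 (by norm_num), key r 2 (by norm_num), key r 2 (by norm_num), key r 6 (by norm_num), key r 4 (by norm_num), key r 4 (by norm_num)]
    norm_num
  have hM13 : pderiv 1 f * pderiv 3 g - pderiv 3 f * pderiv 1 g = -monomial (expo 2 0 0 1) 2 + monomial (expo 1 1 1 0) 2 - monomial (expo 1 1 0 1) 4 + monomial (expo 0 3 0 0) 2 - monomial (expo 0 2 0 1) 6 - monomial (expo 0 1 1 1) 4 - monomial (expo 0 1 0 2) 4 := by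
    rw [pf1, pg3, pf3, pg1]
    simp only [mono_eq, map_ofNat, C_1, one_mul]
    ring
  have hK13 : (pderiv 1 f * pderiv 3 g - pderiv 3 f * pderiv 1 g) ∈ K := by
    rw [mem_K, hM13]
    intro r
    simp only [mul_add, mul_sub, mul_neg, coeff_add, coeff_sub, coeff_neg]
    rw [key r 2 (by norm_num), key r 2 (by norm_num), key r 4 (by norm_num), key r 2 (by norm_num), key r 6 (by norm_num), key r 4 (by norm_num), key r 4 (by norm_num)]
    norm_num
  have hM23 : pderiv 2 f * pderiv 3 g - pderiv 3 f * pderiv 2 g = monomial (expo 1 0 2 0) 2 - monomial (expo 1 0 0 2) 2 + monomial (expo 0 2 1 0) 2 - monomial (expo 0 2 0 1) 2 := by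
    rw [pf2, pg3, pf3, pg2]
    simp only [mono_eq, map_ofNat, C_1, one_mul]
    ring
  have hK23 : (pderiv 2 f * pderiv 3 g - pderiv 3 f * pderiv 2 g) ∈ K := by
    rw [mem_K, hM23]
    intro r
    simp only [mul_add, mul_sub, mul_neg, coeff_add, coeff_sub, coeff_neg]
    rw [key r 2 (by norm_num), key r 2 (by norm_num), key r 2 (by norm_num), key r 2 (by norm_num)]
    norm_num
  have hK10 : (pderiv 1 f * pderiv 0 g - pderiv 0 f * pderiv 1 g) ∈ K := by
    have h : pderiv 1 f * pderiv 0 g - pderiv 0 f * pderiv 1 g = -(pderiv 0 f * pderiv 1 g - pderiv 1 f * pderiv 0 g) := by ring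
    rw [h]; exact K.neg_mem hK01
  have hK20 : (pderiv 2 f * pderiv 0 g - pderiv 0 f * pderiv 2 g) ∈ K := by
    have h : pderiv 2 f * pderiv 0 g - pderiv 0 f * pderiv 2 g = -(pderiv 0 f * pderiv 2 g - pderiv 2 f * pderiv 0 g) := by ring
    rw [h]; exact K.neg_mem hK02
  have hK30 : (pderiv 3 f * pderiv 0 g - pderiv 0 f * pderiv 3 g) ∈ K := by
    have h : pderiv 3 f * pderiv 0 g - pderiv 0 f * pderiv 3 g = -(pderiv 0 f * pderiv 3 g - pderiv 3 f * pderiv 0 g) := by ring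
    rw [h]; exact K.neg_mem hK03
  have hK21 : (pderiv 2 f * pderiv 1 g - pderiv 1 f * pderiv 2 g) ∈ K := by
    have h : pderiv 2 f * pderiv 1 g - pderiv 1 f * pderiv 2 g = -(pderiv 1 f * pderiv 2 g - pderiv 2 f * pderiv 1 g) := by ring
    rw [h]; exact K.neg_mem hK12
  have hK31 : (pderiv 3 f * pderiv 1 g - pderiv 1 f * pderiv 3 g) ∈ K := by
    have h : pderiv 3 f * pderiv 1 g - pderiv 1 f * pderiv 3 g = -(pderiv 1 f * pderiv 3 g - pderiv 3 f * pderiv 1 g) := by ring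
    rw [h]; exact K.neg_mem hK13
  have hK32 : (pderiv 3 f * pderiv 2 g - pderiv 2 f * pderiv 3 g) ∈ K := by
    have h : pderiv 3 f * pderiv 2 g - pderiv 2 f * pderiv 3 g = -(pderiv 2 f * pderiv 3 g - pderiv 3 f * pderiv 2 g) := by ring
    rw [h]; exact K.neg_mem hK23
  -- `f` lies in `K`
  have hKf : f ∈ K := by
    rw [mem_K]
    intro r
    have h : f = monomial (expo 2 0 0 0) 1 + monomial (expo 0 2 0 0) 1
        + monomial (expo 0 0 2 0) 1 + monomial (expo 0 0 0 2) 1 := by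
      rw [hf]; simp only [mono_eq, C_1, one_mul]; ring
    rw [h]
    simp only [mul_add, coeff_add]
    rw [key r 1 (by norm_num), key r 1 (by norm_num), key r 1 (by norm_num),
      key r 1 (by norm_num)]
    norm_num
  -- the ideal `I(f,g)` is contained in `K`
  have hIK : Ideal.span {f} ⊔ m2 ≤ K := by
    refine sup_le ?_ ?_
    · rw [Ideal.span_le, Set.singleton_subset_iff]
      exact hKf
    · rw [hm2, Ideal.span_le]
      rintro p ⟨⟨i, j⟩, rfl⟩
      fin_cases i <;> fin_cases j
      · simpa using K.zero_mem
      · exact hK01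
      · exact hK02
      · exact hK03
      · exact hK10
      · simpa using K.zero_mem
      · exact hK12
      · exact hK13
      · exact hK20
      · exact hK21
      · simpa using K.zero_mem
      · exact hK23
      · exact hK30
      · exact hK31
      · exact hK32
      · simpa using K.zero_mem
  -- the `xzw`-coefficient of `g` is `1`
  have hcoeffg : coeff (expo 1 0 1 1) g = 1 := by
    have h : g = monomial (expo 3 0 0 0) 1 + monomial (expo 2 1 0 0) 1 + monomial (expo 1 2 0 0) 1 + monomial (expo 1 0 1 1) 1 + monomial (expo 0 3 0 0) 1 + monomial (expo 0 2 1 0) 1 + monomial (expo 0 2 0 1) 1 := by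
      rw [hg]; simp only [mono_eq, C_1, one_mul]; ring
    rw [h]
    simp [coeff_monomial, expo_eq]
  -- `g` is not in the ideal
  have hnotmem : g ∉ Ideal.span {f} ⊔ m2 := by
    intro hmem
    have h0 := (mem_K.mp (hIK hmem)) 1
    rw [one_mul, hcoeffg] at h0
    exact one_ne_zero h0
  -- generators of the ideal
  have hfI : f ∈ Ideal.span {f} ⊔ m2 :=
    Ideal.mem_sup_left (Ideal.subset_span rfl)
  have hPI : ∀ i j : Fin 4,
      (pderiv i f * pderiv j g - pderiv j f * pderiv i g) ∈ Ideal.span {f} ⊔ m2 := by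
    intro i j
    exact Ideal.mem_sup_right (hm2 ▸ Ideal.subset_span ⟨(i, j), rfl⟩)
  -- Euler-type relations: `X j * g` lies in the ideal
  have hC6 : (C (6⁻¹ : ℂ) : MvPolynomial (Fin 4) ℂ) * 6 = 1 := by
    rw [show ((6 : MvPolynomial (Fin 4) ℂ)) = C 6 from (map_ofNat C 6).symm, ← C_mul]
    norm_num
  have hXg : ∀ j : Fin 4, X j * g ∈ Ideal.span {f} ⊔ m2 → True := fun _ _ => trivial
  have hXg0 : X 0 * g ∈ Ideal.span {f} ⊔ m2 := by
    have h6 : (6 : MvPolynomial (Fin 4) ℂ) * (X 0 * g)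
        = (2 * pderiv 0 g) * f
          + (-(X 1)) * (pderiv 1 f * pderiv 0 g - pderiv 0 f * pderiv 1 g)
          + (-(X 2)) * (pderiv 2 f * pderiv 0 g - pderiv 0 f * pderiv 2 g)
          + (-(X 3)) * (pderiv 3 f * pderiv 0 g - pderiv 0 f * pderiv 3 g) := by
      rw [pf0, pf1, pf2, pf3, pg0, pg1, pg2, pg3, hf, hg]
      ring
    have hmem6 : (6 : MvPolynomial (Fin 4) ℂ) * (X 0 * g) ∈ Ideal.span {f} ⊔ m2 := by
      rw [h6]
      exact add_mem (add_mem (add_mem (Ideal.mul_mem_left _ _ hfI)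
        (Ideal.mul_mem_left _ _ (hPI 1 0))) (Ideal.mul_mem_left _ _ (hPI 2 0)))
        (Ideal.mul_mem_left _ _ (hPI 3 0))
    have heq : X 0 * g = C (6⁻¹ : ℂ) * (6 * (X 0 * g)) := by
      rw [← mul_assoc, hC6, one_mul]
    rw [heq]
    exact Ideal.mul_mem_left _ _ hmem6
  have hXg1 : X 1 * g ∈ Ideal.span {f} ⊔ m2 := by
    have h6 : (6 : MvPolynomial (Fin 4) ℂ) * (X 1 * g)
        = (2 * pderiv 1 g) * f
          + (-(X 0)) * (pderiv 0 f * pderiv 1 g - pderiv 1 f * pderiv 0 g)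
          + (-(X 2)) * (pderiv 2 f * pderiv 1 g - pderiv 1 f * pderiv 2 g)
          + (-(X 3)) * (pderiv 3 f * pderiv 1 g - pderiv 1 f * pderiv 3 g) := by
      rw [pf0, pf1, pf2, pf3, pg0, pg1, pg2, pg3, hf, hg]
      ring
    have hmem6 : (6 : MvPolynomial (Fin 4) ℂ) * (X 1 * g) ∈ Ideal.span {f} ⊔ m2 := by
      rw [h6]
      exact add_mem (add_mem (add_mem (Ideal.mul_mem_left _ _ hfI)
        (Ideal.mul_mem_left _ _ (hPI 0 1))) (Ideal.mul_mem_left _ _ (hPI 2 1)))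
        (Ideal.mul_mem_left _ _ (hPI 3 1))
    have heq : X 1 * g = C (6⁻¹ : ℂ) * (6 * (X 1 * g)) := by
      rw [← mul_assoc, hC6, one_mul]
    rw [heq]
    exact Ideal.mul_mem_left _ _ hmem6
  -- `g ^ 2` lies in the ideal
  have hg2 : g ^ 2 ∈ Ideal.span {f} ⊔ m2 := by
    have hdecomp : g ^ 2 = (X 2 * X 3 + X 0 ^ 2 + X 0 * X 1 + X 1 ^ 2) * (X 0 * g)
        + (X 1 * X 2 + X 1 * X 3 + X 1 ^ 2) * (X 1 * g) := by
      rw [hg]; ring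
    rw [hdecomp]
    exact add_mem (Ideal.mul_mem_left _ _ hXg0) (Ideal.mul_mem_left _ _ hXg1)
  refine ⟨hnotmem, ⟨2, hg2⟩, ?_⟩
  intro heq
  apply hnotmem
  rw [heq]
  exact Ideal.mem_sup_left (Ideal.subset_span (by simp))
end
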